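/- For nonnegative integers a, b, the identity ∑_{k=a}^{a+b} [k choose a]_q [k choose b]_q [a+b+1 choose k+1]_q (-1)^k q^{C(k+1,2) + C(a+1,2) + C(b+1,2) - (k+1)(a+b)} = (-1)^{a-b} holds in ℤ[q, q^{-1}], where C(m,2) = m(m-1)/2. -/

import Mathlib

open Polynomial Finset

/-- The q-integer `[n]_q = 1 + q + ⋯ + q^{n-1}` as a polynomial in `ℤ[q]`. -/
noncomputable def qint (n : ℕ) : Polynomial ℤ := ∑ i ∈ Finset.range n, X ^ i

/-- The q-factorial `[n]_q! = [n]_q [n-1]_q ⋯ [1]_q`. -/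
noncomputable def qfact : ℕ → Polynomial ℤ
  | 0 => 1
  | n + 1 => qint (n + 1) * qfact n

/-- The Gaussian (q-)binomial coefficient `[n choose k]_q` as a polynomial in `ℤ[q]`,
defined by the q-Pascal recurrence; it equals `∏_{i=1}^k (1-q^{n-i+1})/(1-q^i)` for
`0 ≤ k ≤ n` and `0` otherwise. -/
noncomputable def qbinom : ℕ → ℕ → Polynomial ℤ
  | _, 0 => 1
  | 0, _ + 1 => 0
  | n + 1, k + 1 => qbinom n k + X ^ (k + 1) * qbinom n (k + 1)

open LaurentPolynomial

@[simp] lemma qbinom_zero_right (n : ℕ) : qbinom n 0 = 1 := by cases n <;> rfl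
@[simp] lemma qbinom_zero_succ (k : ℕ) : qbinom 0 (k+1) = 0 := rfl
lemma qbinom_succ_succ (n k : ℕ) :
    qbinom (n+1) (k+1) = qbinom n k + X ^ (k + 1) * qbinom n (k + 1) := rfl

lemma qbinom_eq_zero : ∀ {n k : ℕ}, n < k → qbinom n k = 0 := by
  intro n
  induction n with
  | zero => intro k hk; match k, hk with | k+1, _ => rfl
  | succ n ih =>
    intro k hk
    match k, hk with
    | k+1, hk =>
      rw [qbinom_succ_succ, ih (by omega), ih (by omega)]
      ring

/-- `[c]_q!`-like product `∏_{j=1}^c (q^j - 1)`. -/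
noncomputable def cfac (c : ℕ) : LaurentPolynomial ℤ :=
  ∏ j ∈ range c, (T ((j:ℤ)+1) - 1)

/-- `∏_{j=0}^{c-1} (q^{z-j} - 1)`. -/
noncomputable def PP (c : ℕ) (z : ℤ) : LaurentPolynomial ℤ :=
  ∏ j ∈ range c, (T (z - j) - 1)

lemma T_ne_one {n : ℤ} (hn : n ≠ 0) : (T n : LaurentPolynomial ℤ) ≠ 1 := by
  intro h
  rw [← T_zero] at h
  have h2 : (AddMonoidAlgebra.single n (1:ℤ) : LaurentPolynomial ℤ) = AddMonoidAlgebra.single (0:ℤ) (1:ℤ) := h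
  rw [AddMonoidAlgebra.single_left_inj one_ne_zero] at h2
  exact hn h2

lemma cfac_ne_zero (c : ℕ) : cfac c ≠ 0 := by
  refine Finset.prod_ne_zero_iff.mpr fun j _ => sub_ne_zero.mpr (T_ne_one ?_)
  omega

/-- Product formula: `[m choose c]_q ∏_{j=1}^c (q^j-1) = ∏_{j=0}^{c-1}(q^{m-j}-1)`. -/
lemma qbinom_mul_cfac (m : ℕ) : ∀ c : ℕ,
    toLaurent (qbinom m c) * cfac c = PP c (m:ℤ) := by
  induction m with
  | zero =>
    intro c
    cases c with
    | zero => simp [cfac, PP]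
    | succ c =>
      rw [qbinom_zero_succ]
      simp only [map_zero, zero_mul]
      refine (Finset.prod_eq_zero (Finset.mem_range.mpr (Nat.succ_pos c)) ?_).symm
      simp
  | succ m ih =>
    intro c
    cases c with
    | zero => simp [cfac, PP]
    | succ c =>
      have h1 := ih c
      have h2 := ih (c+1)
      have hc1 : cfac (c+1) = cfac c * (T ((c:ℤ)+1) - 1) := by
        rw [cfac, Finset.prod_range_succ]; rfl
      have hP2 : PP (c+1) ((m:ℤ)) = PP c (m:ℤ) * (T ((m:ℤ) - c) - 1) := by
        rw [PP, Finset.prod_range_succ]; rfl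
      have hRHS : PP (c+1) ((m+1:ℕ):ℤ) = PP c (m:ℤ) * (T ((m:ℤ)+1) - 1) := by
        rw [PP, Finset.prod_range_succ', PP]
        have e1 : ∀ j : ℕ, (T (((m+1:ℕ):ℤ) - ((j+1:ℕ):ℤ)) - 1 : LaurentPolynomial ℤ)
            = T ((m:ℤ) - (j:ℤ)) - 1 := fun j => by congr 2; push_cast; ring
        simp only [e1]
        have e2 : (((m+1:ℕ):ℤ) - ((0:ℕ):ℤ)) = (m:ℤ)+1 := by push_cast; ring
        rw [e2]
      have hT : (T ((c:ℤ)+1) * T ((m:ℤ) - c) : LaurentPolynomial ℤ) = T ((m:ℤ)+1) := by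
        rw [← T_add]; congr 1; ring
      rw [qbinom_succ_succ, map_add, map_mul, toLaurent_X_pow, hc1, hRHS]
      rw [hP2] at h2
      have hTc : (T ((c+1:ℕ):ℤ) : LaurentPolynomial ℤ) = T ((c:ℤ)+1) := by
        norm_cast
      rw [hTc]
      linear_combination (T ((c:ℤ)+1) - 1) * h1 + T ((c:ℤ)+1) * h2 + PP c (m:ℤ) * hT - T ((c:ℤ)+1) * toLaurent (qbinom m (c+1)) * hc1

lemma choose_two_succ (i : ℕ) : (i+1).choose 2 = i.choose 2 + i := by
  rw [Nat.choose_succ_succ i 1, Nat.choose_one_right, Nat.add_comm]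

/-- Gauss binomial theorem. -/
lemma gauss (n : ℕ) : ∀ w : LaurentPolynomial ℤ,
    ∑ i ∈ range (n+1), ((-1)^i * T ((i.choose 2 : ℤ)) * toLaurent (qbinom n i) * w^i)
      = ∏ j ∈ range n, (1 - T (j:ℤ) * w) := by
  induction n with
  | zero => intro w; simp
  | succ n ih =>
    intro w
    have ihw := ih (T 1 * w)
    rw [Finset.sum_range_succ']
    have hpt : ∀ i : ℕ,
        ((-1:LaurentPolynomial ℤ)^(i+1) * T (((i+1).choose 2 : ℤ)) *
            toLaurent (qbinom (n+1) (i+1)) * w^(i+1))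
        = -(w * ((-1)^i * T ((i.choose 2:ℤ)) * toLaurent (qbinom n i) * (T 1 * w)^i))
          + (-1)^(i+1) * T (((i+1).choose 2 : ℤ)) * toLaurent (qbinom n (i+1)) *
              (T 1 * w)^(i+1) := by
      intro i
      have e1 : (T (((i+1).choose 2 : ℤ)) : LaurentPolynomial ℤ)
          = T ((i.choose 2 : ℤ)) * (T 1)^i := by
        rw [T_pow, ← T_add]
        congr 1
        rw [choose_two_succ]
        push_cast
        ring
      have e2 : toLaurent ((X:Polynomial ℤ)^(i+1)) = ((T 1 : LaurentPolynomial ℤ))^(i+1) := by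
        rw [toLaurent_X_pow, T_pow]
        congr 1
        push_cast
        ring
      rw [qbinom_succ_succ, map_add, map_mul, e2]
      rw [e1]
      ring
    rw [Finset.sum_congr rfl (fun i _ => hpt i), Finset.sum_add_distrib]
    have hB : ∑ i ∈ range (n+1),
        ((-1:LaurentPolynomial ℤ)^(i+1) * T (((i+1).choose 2 : ℤ)) * toLaurent (qbinom n (i+1)) *
          (T 1 * w)^(i+1))
        = (∑ i ∈ range (n+1), ((-1:LaurentPolynomial ℤ)^i * T ((i.choose 2:ℤ)) *
            toLaurent (qbinom n i) * (T 1 * w)^i)) - 1 := by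
      have := Finset.sum_range_succ'
        (fun i => ((-1:LaurentPolynomial ℤ)^i * T ((i.choose 2:ℤ)) *
            toLaurent (qbinom n i) * (T 1 * w)^i)) (n+1)
      have htop : ((-1:LaurentPolynomial ℤ)^(n+1) * T (((n+1).choose 2:ℤ)) *
          toLaurent (qbinom n (n+1)) * (T 1 * w)^(n+1)) = 0 := by
        rw [qbinom_eq_zero (Nat.lt_succ_self n)]
        simp
      rw [Finset.sum_range_succ] at this
      simp only [htop, add_zero] at this
      rw [this]
      simp
    rw [hB]
    have hA : ∑ i ∈ range (n+1),
        -(w * ((-1:LaurentPolynomial ℤ)^i * T ((i.choose 2:ℤ)) * toLaurent (qbinom n i) *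
          (T 1 * w)^i))
        = -(w * ∑ i ∈ range (n+1), ((-1:LaurentPolynomial ℤ)^i * T ((i.choose 2:ℤ)) *
            toLaurent (qbinom n i) * (T 1 * w)^i)) := by
      rw [Finset.sum_neg_distrib, ← Finset.mul_sum]
    rw [hA, ihw]
    have hRHS : ∏ j ∈ range (n+1), (1 - T (j:ℤ) * w)
        = (∏ j ∈ range n, (1 - T (j:ℤ) * (T 1 * w))) * (1 - w) := by
      rw [Finset.prod_range_succ']
      have e3 : ∀ j : ℕ, (1 - T (((j+1:ℕ)):ℤ) * w : LaurentPolynomial ℤ)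
          = 1 - T (j:ℤ) * (T 1 * w) := fun j => by
        rw [← mul_assoc, ← T_add]
        norm_cast
      simp only [e3]
      congr 2
      simp [T_zero]
    rw [hRHS]
    have hf0 : ((-1:LaurentPolynomial ℤ)^0 * T (((0:ℕ).choose 2 : ℤ)) *
        toLaurent (qbinom (n+1) 0) * w^0) = 1 := by simp
    rw [hf0]
    ring

lemma PP_vanish {c k : ℕ} (h : k < c) : PP c (k:ℤ) = 0 := by
  refine Finset.prod_eq_zero (Finset.mem_range.mpr h) ?_
  simp

lemma T_prod (s : Finset ℕ) (f : ℕ → ℤ) :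
    ∏ j ∈ s, (T (f j) : LaurentPolynomial ℤ) = T (∑ j ∈ s, f j) := by
  induction s using Finset.cons_induction with
  | empty => simp
  | cons x s hx ih => rw [Finset.prod_cons, Finset.sum_cons, ih, ← T_add]

lemma sum_range_choose_two (c : ℕ) : ∑ j ∈ range c, ((j:ℤ)+1) = (((c+1).choose 2 : ℕ) : ℤ) := by
  induction c with
  | zero => simp
  | succ c ih =>
    rw [Finset.sum_range_succ, ih, choose_two_succ (c+1)]
    push_cast
    ring

lemma PP_neg_one (c : ℕ) :
    PP c (-1) = (-1)^c * T (-(((c+1).choose 2 : ℕ):ℤ)) * cfac c := by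
  have e : ∀ j:ℕ, (T ((-1:ℤ) - j) - 1 : LaurentPolynomial ℤ)
      = (-1) * T (-(j:ℤ)-1) * (T ((j:ℤ)+1) - 1) := by
    intro j
    have h1 : (T (-(j:ℤ)-1) * T ((j:ℤ)+1) : LaurentPolynomial ℤ) = 1 := by
      rw [← T_add, show (-(j:ℤ)-1)+((j:ℤ)+1) = 0 by ring, T_zero]
    have h2 : (T ((-1:ℤ) - j) : LaurentPolynomial ℤ) = T (-(j:ℤ)-1) := by
      congr 1; ring
    rw [h2]
    linear_combination h1
  rw [PP]
  rw [Finset.prod_congr rfl (fun j _ => e j), Finset.prod_mul_distrib,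
    Finset.prod_mul_distrib]
  rw [Finset.prod_const, T_prod, cfac, Finset.card_range]
  have hsum : ∑ j ∈ range c, (-(j:ℤ)-1) = -(((c+1).choose 2 : ℕ):ℤ) := by
    rw [← sum_range_choose_two c, ← Finset.sum_neg_distrib]
    exact Finset.sum_congr rfl fun j _ => by ring
  rw [hsum]

lemma full_sum_zero (a b : ℕ) :
    ∑ i ∈ range (a+b+2), ((-1:LaurentPolynomial ℤ)^i * T ((i.choose 2 : ℤ)) *
      toLaurent (qbinom (a+b+1) i) * (T (-(a:ℤ)-(b:ℤ)))^i *
      (PP a ((i:ℤ)-1) * PP b ((i:ℤ)-1))) = 0 := by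
  set Q : Polynomial (LaurentPolynomial ℤ) :=
    (∏ j ∈ range a, (Polynomial.C (T (-1-(j:ℤ))) * Polynomial.X - 1)) *
    (∏ j ∈ range b, (Polynomial.C (T (-1-(j:ℤ))) * Polynomial.X - 1)) with hQ
  have hfac : ∀ j : ℕ, (Polynomial.C (T (-1-(j:ℤ)) : LaurentPolynomial ℤ) *
      Polynomial.X - 1).natDegree ≤ 1 := by
    intro j
    refine le_trans (Polynomial.natDegree_sub_le _ _) ?_
    simp only [Polynomial.natDegree_one, max_le_iff]
    constructor
    · exact le_trans (Polynomial.natDegree_C_mul_le _ _) (by simp)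
    · omega
  have hdeg : Q.natDegree < a + b + 1 := by
    rw [hQ]
    have d1 := Polynomial.natDegree_mul_le (p :=
      ∏ j ∈ range a, (Polynomial.C (T (-1-(j:ℤ)) : LaurentPolynomial ℤ) * Polynomial.X - 1))
      (q := ∏ j ∈ range b, (Polynomial.C (T (-1-(j:ℤ)) : LaurentPolynomial ℤ) * Polynomial.X - 1))
    have d2 := Polynomial.natDegree_prod_le (range a)
      (fun j => (Polynomial.C (T (-1-(j:ℤ)) : LaurentPolynomial ℤ) * Polynomial.X - 1))
    have d3 := Polynomial.natDegree_prod_le (range b)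
      (fun j => (Polynomial.C (T (-1-(j:ℤ)) : LaurentPolynomial ℤ) * Polynomial.X - 1))
    have d4 : ∑ j ∈ range a, (Polynomial.C (T (-1-(j:ℤ)) : LaurentPolynomial ℤ) *
        Polynomial.X - 1).natDegree ≤ a := by
      refine le_trans (Finset.sum_le_sum fun j _ => hfac j) ?_
      simp
    have d5 : ∑ j ∈ range b, (Polynomial.C (T (-1-(j:ℤ)) : LaurentPolynomial ℤ) *
        Polynomial.X - 1).natDegree ≤ b := by
      refine le_trans (Finset.sum_le_sum fun j _ => hfac j) ?_
      simp
    omega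
  have heval : ∀ i : ℕ, PP a ((i:ℤ)-1) * PP b ((i:ℤ)-1) = Q.eval (T (i:ℤ)) := by
    intro i
    rw [hQ, Polynomial.eval_mul, Polynomial.eval_prod, Polynomial.eval_prod, PP, PP]
    congr 1 <;> refine Finset.prod_congr rfl fun j _ => ?_ <;>
      simp only [Polynomial.eval_sub, Polynomial.eval_mul, Polynomial.eval_C,
        Polynomial.eval_X, Polynomial.eval_one] <;>
      rw [← T_add] <;> congr 2 <;> ring
  have hpow : ∀ i s : ℕ, ((T (-(a:ℤ)-(b:ℤ)))^i * (T (i:ℤ))^s : LaurentPolynomial ℤ)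
      = (T ((s:ℤ)-(a:ℤ)-(b:ℤ)))^i := by
    intro i s
    rw [T_pow, T_pow, T_pow, ← T_add]
    congr 1
    push_cast
    ring
  have step1 : ∀ i ∈ range (a+b+2),
      ((-1:LaurentPolynomial ℤ)^i * T ((i.choose 2 : ℤ)) *
        toLaurent (qbinom (a+b+1) i) * (T (-(a:ℤ)-(b:ℤ)))^i *
        (PP a ((i:ℤ)-1) * PP b ((i:ℤ)-1)))
      = ∑ s ∈ range (a+b+1), (Q.coeff s *
          ((-1)^i * T ((i.choose 2 : ℤ)) * toLaurent (qbinom (a+b+1) i) *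
            (T ((s:ℤ)-(a:ℤ)-(b:ℤ)))^i)) := by
    intro i _
    rw [heval i, Polynomial.eval_eq_sum_range' hdeg, Finset.mul_sum]
    refine Finset.sum_congr rfl fun s _ => ?_
    rw [← hpow i s]
    ring
  rw [Finset.sum_congr rfl step1, Finset.sum_comm]
  refine Finset.sum_eq_zero fun s hs => ?_
  have hs' : s ≤ a + b := by have := Finset.mem_range.mp hs; omega
  rw [← Finset.mul_sum]
  have hg := gauss (a+b+1) (T ((s:ℤ)-(a:ℤ)-(b:ℤ)))
  rw [hg]
  have hzero : (1 - T (((a+b-s:ℕ)):ℤ) * T ((s:ℤ)-(a:ℤ)-(b:ℤ)) : LaurentPolynomial ℤ) = 0 := by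
    rw [← T_add, show (((a+b-s:ℕ)):ℤ) + ((s:ℤ)-(a:ℤ)-(b:ℤ)) = 0 by
      push_cast [Nat.cast_sub (by omega : s ≤ a + b)]; ring, T_zero]
    ring
  rw [Finset.prod_eq_zero (Finset.mem_range.mpr (by omega : a+b-s < a+b+1)) hzero, mul_zero]

open LaurentPolynomial in
/-- `∑_{k=a}^{a+b} [k choose a]_q [k choose b]_q [a+b+1 choose k+1]_q
  (-1)^k q^{C(k+1,2)+C(a+1,2)+C(b+1,2)-(k+1)(a+b)} = (-1)^{a-b}` in `ℤ[q,q^{-1}]`. -/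
theorem stmt13 (a b : ℕ) :
    ∑ k ∈ Finset.Icc a (a + b),
        Polynomial.toLaurent (qbinom k a * qbinom k b * qbinom (a + b + 1) (k + 1)) *
          (-1) ^ k *
          T (((k + 1).choose 2 : ℤ) + ((a + 1).choose 2 : ℤ) + ((b + 1).choose 2 : ℤ) -
            ((k : ℤ) + 1) * ((a : ℤ) + b)) =
      (-1) ^ (a + b) := by
  have hcc : cfac a * cfac b ≠ 0 := mul_ne_zero (cfac_ne_zero a) (cfac_ne_zero b)
  refine mul_right_cancel₀ hcc ?_
  rw [Finset.sum_mul]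
  set Cab : ℤ := ((a + 1).choose 2 : ℤ) + ((b + 1).choose 2 : ℤ) with hCab
  have hterm : ∀ k ∈ Finset.Icc a (a+b),
      (Polynomial.toLaurent (qbinom k a * qbinom k b * qbinom (a + b + 1) (k + 1)) *
          (-1) ^ k *
          T (((k + 1).choose 2 : ℤ) + ((a + 1).choose 2 : ℤ) + ((b + 1).choose 2 : ℤ) -
            ((k : ℤ) + 1) * ((a : ℤ) + b))) * (cfac a * cfac b)
      = -(T Cab * ((-1:LaurentPolynomial ℤ)^(k+1) * T (((k+1).choose 2 : ℤ)) *
          toLaurent (qbinom (a+b+1) (k+1)) * (T (-(a:ℤ)-(b:ℤ)))^(k+1) *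
          (PP a (((k+1:ℕ):ℤ)-1) * PP b (((k+1:ℕ):ℤ)-1)))) := by
    intro k _
    have h1 : toLaurent (qbinom k a) * cfac a = PP a (k:ℤ) := qbinom_mul_cfac k a
    have h2 : toLaurent (qbinom k b) * cfac b = PP b (k:ℤ) := qbinom_mul_cfac k b
    have hPa : PP a (((k+1:ℕ):ℤ)-1) = PP a (k:ℤ) := by norm_num
    have hPb : PP b (((k+1:ℕ):ℤ)-1) = PP b (k:ℤ) := by norm_num
    have hTe : (T (((k + 1).choose 2 : ℤ) + ((a + 1).choose 2 : ℤ) + ((b + 1).choose 2 : ℤ) -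
            ((k : ℤ) + 1) * ((a : ℤ) + b)) : LaurentPolynomial ℤ)
        = T (((k+1).choose 2 : ℤ)) * (T (-(a:ℤ)-(b:ℤ)))^(k+1) * T Cab := by
      rw [T_pow, ← T_add, ← T_add, hCab]
      congr 1
      push_cast
      ring
    rw [map_mul, map_mul, hTe, hPa, hPb]
    linear_combination
      (((-1:LaurentPolynomial ℤ))^k * T (((k+1).choose 2 : ℤ)) *
        toLaurent (qbinom (a+b+1) (k+1)) * (T (-(a:ℤ)-(b:ℤ)))^(k+1) * T Cab) *
        (toLaurent (qbinom k b) * cfac b * h1 + PP a (k:ℤ) * h2)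
  rw [Finset.sum_congr rfl hterm]
  have hvan : ∀ k ∈ range (a+b+1), k ∉ Finset.Icc a (a+b) →
      -(T Cab * ((-1:LaurentPolynomial ℤ)^(k+1) * T (((k+1).choose 2 : ℤ)) *
          toLaurent (qbinom (a+b+1) (k+1)) * (T (-(a:ℤ)-(b:ℤ)))^(k+1) *
          (PP a (((k+1:ℕ):ℤ)-1) * PP b (((k+1:ℕ):ℤ)-1)))) = 0 := by
    intro k hk hk'
    have hka : k < a := by
      have h1 := Finset.mem_range.mp hk
      simp only [Finset.mem_Icc] at hk'
      omega
    have hPa : PP a (((k+1:ℕ):ℤ)-1) = PP a (k:ℤ) := by norm_num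
    rw [hPa, PP_vanish hka]
    ring
  rw [Finset.sum_subset (fun k hk => Finset.mem_range.mpr
    (by have := Finset.mem_Icc.mp hk; omega)) hvan]
  have hshift := Finset.sum_range_succ'
    (fun i => ((-1:LaurentPolynomial ℤ)^i * T ((i.choose 2 : ℤ)) *
      toLaurent (qbinom (a+b+1) i) * (T (-(a:ℤ)-(b:ℤ)))^i *
      (PP a ((i:ℤ)-1) * PP b ((i:ℤ)-1)))) (a+b+1)
  rw [full_sum_zero a b] at hshift
  have hff0 : ((-1:LaurentPolynomial ℤ)^(0:ℕ) * T (((0:ℕ).choose 2 : ℤ)) *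
      toLaurent (qbinom (a+b+1) 0) * (T (-(a:ℤ)-(b:ℤ)))^(0:ℕ) *
      (PP a (((0:ℕ):ℤ)-1) * PP b (((0:ℕ):ℤ)-1)))
      = PP a (-1) * PP b (-1) := by
    norm_num
  rw [hff0] at hshift
  -- hshift : 0 = ∑ i ∈ range (a+b+1), ff (i+1) + PP a (-1) * PP b (-1)
  have hsum : ∑ k ∈ range (a+b+1),
      -(T Cab * ((-1:LaurentPolynomial ℤ)^(k+1) * T (((k+1).choose 2 : ℤ)) *
          toLaurent (qbinom (a+b+1) (k+1)) * (T (-(a:ℤ)-(b:ℤ)))^(k+1) *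
          (PP a (((k+1:ℕ):ℤ)-1) * PP b (((k+1:ℕ):ℤ)-1))))
      = -(T Cab * ∑ k ∈ range (a+b+1),
          ((-1:LaurentPolynomial ℤ)^(k+1) * T (((k+1).choose 2 : ℤ)) *
          toLaurent (qbinom (a+b+1) (k+1)) * (T (-(a:ℤ)-(b:ℤ)))^(k+1) *
          (PP a (((k+1:ℕ):ℤ)-1) * PP b (((k+1:ℕ):ℤ)-1)))) := by
    rw [Finset.sum_neg_distrib, ← Finset.mul_sum]
  rw [hsum]
  have hcast : ∀ k : ℕ, (((k+1:ℕ):ℤ)-1) = ((k:ℤ)+1-1) := by intro k; push_cast; ring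
  have hTfin : (T Cab * (T (-(((a+1).choose 2 : ℕ):ℤ)) * T (-(((b+1).choose 2 : ℕ):ℤ)))
      : LaurentPolynomial ℤ) = 1 := by
    rw [← T_add, ← T_add, show Cab + (-(((a+1).choose 2 : ℕ):ℤ) + -(((b+1).choose 2 : ℕ):ℤ))
      = 0 by rw [hCab]; push_cast; ring, T_zero]
  have hfinal : ∑ k ∈ range (a+b+1),
      ((-1:LaurentPolynomial ℤ)^(k+1) * T (((k+1).choose 2 : ℤ)) *
          toLaurent (qbinom (a+b+1) (k+1)) * (T (-(a:ℤ)-(b:ℤ)))^(k+1) *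
          (PP a (((k+1:ℕ):ℤ)-1) * PP b (((k+1:ℕ):ℤ)-1)))
      = -(PP a (-1) * PP b (-1)) := by
    linear_combination -hshift
  rw [hfinal, PP_neg_one, PP_neg_one]
  calc -(T Cab * -((-1:LaurentPolynomial ℤ)^a * T (-(((a+1).choose 2 : ℕ):ℤ)) * cfac a *
        ((-1)^b * T (-(((b+1).choose 2 : ℕ):ℤ)) * cfac b)))
      = ((-1:LaurentPolynomial ℤ)^a * (-1)^b) *
        (T Cab * (T (-(((a+1).choose 2 : ℕ):ℤ)) * T (-(((b+1).choose 2 : ℕ):ℤ)))) *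
        (cfac a * cfac b) := by ring
    _ = (-1)^(a+b) * (cfac a * cfac b) := by rw [hTfin, pow_add]; ring
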